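/- Let G be an abelian topological group, H a closed subgroup of G such that the quotient group G/H is a torsion group, X a topological vector space over ℂ, and n ∈ ℕ. Then the restriction map r : P^n(G,X) → P^n(H,X), r(p) = p|_H, is injective; consequently dim P^n(G,X) ≤ dim P^n(H,X). -/

import Mathlib

open scoped BigOperators

/-- Forward difference operator: `delta h f t = f (t + h) - f t`. -/
def delta {J X : Type*} [Add J] [Sub X] (h : J) (f : J → X) : J → X :=
  fun t => f (t + h) - f t

/-- `f : J → X` is a (continuous) polynomial of degree at most `n`,
i.e. `f ∈ P^n(J, X)`. -/
def IsPolyDeg {J X : Type*} [Add J] [Sub X] [Zero X] [TopologicalSpace J] [TopologicalSpace X]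
    (n : ℕ) (f : J → X) : Prop :=
  Continuous f ∧ ∀ h : J, (delta h)^[n + 1] f = 0

theorem delta_add {J X : Type*} [Add J] [AddCommGroup X] (h : J) (f g : J → X) :
    delta h (f + g) = delta h f + delta h g := by
  funext t
  simp only [delta, Pi.add_apply]
  abel

theorem delta_smul {J X : Type*} [Add J] [AddCommGroup X] [Module ℂ X]
    (h : J) (c : ℂ) (f : J → X) :
    delta h (c • f) = c • delta h f := by
  funext t
  simp only [delta, Pi.smul_apply, smul_sub]

theorem delta_zero {J X : Type*} [Add J] [AddCommGroup X] (h : J) :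
    delta h (0 : J → X) = 0 := by
  funext t
  simp [delta]

theorem delta_iter_add {J X : Type*} [Add J] [AddCommGroup X] (h : J) (k : ℕ) (f g : J → X) :
    (delta h)^[k] (f + g) = (delta h)^[k] f + (delta h)^[k] g := by
  induction k generalizing f g with
  | zero => rfl
  | succ k ih =>
    rw [Function.iterate_succ_apply, Function.iterate_succ_apply, Function.iterate_succ_apply,
      delta_add, ih]

theorem delta_iter_smul {J X : Type*} [Add J] [AddCommGroup X] [Module ℂ X]
    (h : J) (k : ℕ) (c : ℂ) (f : J → X) :
    (delta h)^[k] (c • f) = c • (delta h)^[k] f := by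
  induction k generalizing f with
  | zero => rfl
  | succ k ih =>
    rw [Function.iterate_succ_apply, Function.iterate_succ_apply, delta_smul, ih]

theorem delta_iter_zero {J X : Type*} [Add J] [AddCommGroup X] (h : J) (k : ℕ) :
    (delta h)^[k] (0 : J → X) = 0 :=
  Function.iterate_fixed (delta_zero h) k

/-- The space `P^n(J, X)` of polynomials of degree at most `n`, as a `ℂ`-submodule of the
space of all functions `J → X`. -/
def polySpace (J X : Type*) [Add J] [TopologicalSpace J] [AddCommGroup X] [Module ℂ X]
    [TopologicalSpace X] [IsTopologicalAddGroup X] [ContinuousSMul ℂ X] (n : ℕ) :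
    Submodule ℂ (J → X) where
  carrier := {p | IsPolyDeg n p}
  zero_mem' := ⟨continuous_zero, fun h => delta_iter_zero h (n + 1)⟩
  add_mem' := by
    rintro f g ⟨hfc, hfd⟩ ⟨hgc, hgd⟩
    exact ⟨hfc.add hgc, fun h => by rw [delta_iter_add, hfd h, hgd h, add_zero]⟩
  smul_mem' := by
    rintro c f ⟨hfc, hfd⟩
    exact ⟨hfc.const_smul c, fun h => by rw [delta_iter_smul, hfd h, smul_zero]⟩

section MyAux

variable {X : Type*} [AddCommGroup X] [Module ℂ X]

theorem my_delta_sub {J : Type*} [Add J] (h : J) (f g : J → X) :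
    delta h (f - g) = delta h f - delta h g := by
  funext t
  simp only [delta, Pi.sub_apply]
  abel

theorem my_delta_iter_sub {J : Type*} [Add J] (h : J) (k : ℕ) (f g : J → X) :
    (delta h)^[k] (f - g) = (delta h)^[k] f - (delta h)^[k] g := by
  induction k generalizing f g with
  | zero => rfl
  | succ k ih =>
    rw [Function.iterate_succ_apply, Function.iterate_succ_apply,
      Function.iterate_succ_apply, my_delta_sub, ih]

theorem my_delta_comm {J : Type*} [AddCommSemigroup J] (h h' : J) (f : J → X) :
    delta h (delta h' f) = delta h' (delta h f) := by
  funext t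
  simp only [delta]
  rw [add_right_comm]
  abel

theorem my_delta1_shift (c : ℤ) (f : ℤ → X) :
    delta (1:ℤ) (fun t => f (t + c)) = fun t => delta (1:ℤ) f (t + c) := by
  funext t
  simp only [delta]
  rw [add_right_comm]

theorem my_delta1_iter_shift (N : ℕ) (c : ℤ) (f : ℤ → X) :
    (delta (1:ℤ))^[N] (fun t => f (t + c)) = fun t => (delta (1:ℤ))^[N] f (t + c) := by
  induction N generalizing f with
  | zero => rfl
  | succ N ih =>
    rw [Function.iterate_succ_apply, Function.iterate_succ_apply, my_delta1_shift, ih]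

theorem my_delta1_iter_delta_m (N : ℕ) (g : ℤ → X)
    (hg : (delta (1:ℤ))^[N+1] g = 0) (m : ℕ) :
    (delta (1:ℤ))^[N] (delta ((m:ℕ):ℤ) g) = 0 := by
  induction m with
  | zero =>
    have h0 : delta ((0:ℕ):ℤ) g = 0 := by
      funext t; simp [delta]
    rw [h0, delta_iter_zero]
  | succ m ih =>
    have hdecomp : delta ((m+1:ℕ):ℤ) g
        = delta ((m:ℕ):ℤ) g + fun t => delta (1:ℤ) g (t + (m:ℤ)) := by
      funext t
      simp only [delta, Pi.add_apply]
      push_cast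
      rw [← add_assoc]
      abel
    have h1 : (delta (1:ℤ))^[N] (delta (1:ℤ) g) = 0 := by
      rw [← Function.iterate_succ_apply]; exact hg
    rw [hdecomp, delta_iter_add, ih, my_delta1_iter_shift, zero_add]
    simp only [h1, Pi.zero_apply]
    rfl

theorem my_const_of_delta1 (g : ℤ → X) (hg : delta (1:ℤ) g = 0) : ∀ k, g k = g 0 := by
  have step : ∀ t : ℤ, g (t + 1) = g t := by
    intro t
    have := congrFun hg t
    simpa [delta, sub_eq_zero] using this
  intro k
  induction k using Int.induction_on with
  | zero => rfl
  | succ i ih => rw [step, ih]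
  | pred i ih =>
    have h2 := step (-((i:ℤ)+1))
    rw [show -((i:ℤ)+1) + 1 = -(i:ℤ) by ring] at h2
    rw [show -(i:ℤ) - 1 = -((i:ℤ)+1) by ring, ← h2]
    exact ih

theorem my_const_of_periodic (N : ℕ) : ∀ g : ℤ → X, (delta (1:ℤ))^[N] g = 0 →
    ∀ m : ℕ, 0 < m → delta ((m:ℕ):ℤ) g = 0 → ∀ k, g k = g 0 := by
  induction N with
  | zero =>
    intro g hg m _ _ k
    have := congrFun hg k
    have h0 := congrFun hg 0
    simp only [Function.iterate_zero_apply, Pi.zero_apply] at this h0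
    rw [this, h0]
  | succ N ih =>
    intro g hg m hm hmg
    set d := delta (1:ℤ) g with hd_def
    have hd : (delta (1:ℤ))^[N] d = 0 := by
      rw [hd_def, ← Function.iterate_succ_apply]; exact hg
    have hdm : delta ((m:ℕ):ℤ) d = 0 := by
      rw [hd_def, my_delta_comm, hmg, delta_zero]
    have hdconst := ih d hd m hm hdm
    have key : ∀ j : ℕ, g (j:ℤ) = g 0 + j • d 0 := by
      intro j
      induction j with
      | zero => simp
      | succ j ihj =>
        have hgd : g ((j:ℤ)+1) = g (j:ℤ) + d (j:ℤ) := by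
          simp only [hd_def, delta]; abel
        rw [show ((j+1:ℕ):ℤ) = (j:ℤ)+1 by push_cast; ring, hgd, ihj,
          hdconst (j:ℤ), succ_nsmul]
        abel
    have hgm : g ((m:ℕ):ℤ) = g 0 := by
      have := congrFun hmg 0
      simp only [delta, Pi.zero_apply, zero_add] at this
      exact sub_eq_zero.mp this
    have hmd0 : (m:ℕ) • d 0 = 0 := by
      have := key m
      rw [hgm] at this
      exact (left_eq_add.mp this)
    have hd0 : d 0 = 0 := by
      have h2 : (m:ℂ) • d 0 = 0 := by
        rw [Nat.cast_smul_eq_nsmul]; exact hmd0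
      have hm' : (m:ℂ) ≠ 0 := Nat.cast_ne_zero.mpr hm.ne'
      calc d 0 = (m:ℂ)⁻¹ • ((m:ℂ) • d 0) := (inv_smul_smul₀ hm' _).symm
        _ = 0 := by rw [h2, smul_zero]
    have hdz : delta (1:ℤ) g = 0 := by
      funext k
      rw [show delta (1:ℤ) g k = d k from rfl, hdconst k, hd0]
      rfl
    exact my_const_of_delta1 g hdz

theorem my_zero_of_vanish (N : ℕ) : ∀ g : ℤ → X, (delta (1:ℤ))^[N] g = 0 →
    ∀ m : ℕ, 0 < m → (∀ k : ℤ, g (k * m) = 0) → ∀ k, g k = 0 := by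
  induction N with
  | zero =>
    intro g hg _ _ _ k
    exact congrFun hg k
  | succ N ih =>
    intro g hg m hm hv
    have hq : (delta (1:ℤ))^[N] (delta ((m:ℕ):ℤ) g) = 0 := my_delta1_iter_delta_m N g hg m
    have hqv : ∀ k : ℤ, (delta ((m:ℕ):ℤ) g) (k * m) = 0 := by
      intro k
      simp only [delta]
      rw [show k * (m:ℤ) + (m:ℤ) = (k+1) * m by ring, hv (k+1), hv k, sub_zero]
    have hq0 := ih _ hq m hm hqv
    have hconst := my_const_of_periodic (N+1) g hg m hm (funext hq0)
    intro k
    rw [hconst k]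
    simpa using hv 0

theorem my_poly_vanish {G : Type*} [AddCommGroup G] (H : AddSubgroup G)
    (htor : ∀ x : G ⧸ H, IsOfFinAddOrder x) (n : ℕ) (p : G → X)
    (hp : ∀ h : G, (delta h)^[n+1] p = 0) (h0 : ∀ t ∈ H, p t = 0) :
    ∀ x, p x = 0 := by
  intro x
  set m := addOrderOf (QuotientAddGroup.mk x : G ⧸ H) with hm_def
  have hmpos : 0 < m := (htor _).addOrderOf_pos
  have hmem : (m : ℕ) • x ∈ H := by
    have h1 : ((m • x : G) : G ⧸ H) = 0 := by
      rw [show ((m • x : G) : G ⧸ H) = m • (QuotientAddGroup.mk x : G ⧸ H) from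
        map_nsmul (QuotientAddGroup.mk' H) m x]
      exact addOrderOf_nsmul_eq_zero _
    exact (QuotientAddGroup.eq_zero_iff _).mp h1
  have hiter : ∀ (j : ℕ) (q : G → X), (delta (1:ℤ))^[j] (fun k : ℤ => q (k • x))
      = fun k : ℤ => ((delta x)^[j] q) (k • x) := by
    intro j
    induction j with
    | zero => intro q; rfl
    | succ j ihj =>
      intro q
      rw [Function.iterate_succ_apply, Function.iterate_succ_apply]
      have hst : delta (1:ℤ) (fun k : ℤ => q (k • x)) = fun k : ℤ => (delta x q) (k • x) := by
        funext k
        simp only [delta]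
        rw [add_zsmul, one_zsmul]
      rw [hst, ihj]
  have hg : (delta (1:ℤ))^[n+1] (fun k : ℤ => p (k • x)) = 0 := by
    rw [hiter (n+1) p, hp x]
    rfl
  have hv : ∀ k : ℤ, (fun k : ℤ => p (k • x)) (k * m) = 0 := by
    intro k
    have hx : (k * (m:ℤ)) • x = k • ((m:ℕ) • x) := by
      rw [mul_zsmul, natCast_zsmul]
    simp only
    rw [hx]
    exact h0 _ (AddSubgroup.zsmul_mem H hmem k)
  have := my_zero_of_vanish (n+1) _ hg m hmpos hv 1
  simpa using this

theorem my_restrict_delta {G : Type*} [AddCommGroup G] {H : AddSubgroup G}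
    (j : ℕ) (h : H) (f : G → X) :
    (delta h)^[j] (fun t : H => f ↑t) = fun t : H => ((delta (h:G))^[j] f) ↑t := by
  induction j generalizing f with
  | zero => rfl
  | succ j ih =>
    rw [Function.iterate_succ_apply, Function.iterate_succ_apply]
    have hst : delta h (fun t : H => f ↑t) = fun t : H => (delta (h:G) f) ↑t := by
      funext t
      simp [delta]
    rw [hst, ih]

theorem my_restrict_mem {G : Type*} [AddCommGroup G] [TopologicalSpace G]
    [TopologicalSpace X] {H : AddSubgroup G} {n : ℕ} {f : G → X}
    (hf : IsPolyDeg n f) : IsPolyDeg n (fun t : H => f ↑t) := by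
  refine ⟨hf.1.comp continuous_subtype_val, fun h => ?_⟩
  rw [my_restrict_delta]
  simp only [hf.2 (h:G), Pi.zero_apply]
  rfl

end MyAux

/-- if `H` is a closed subgroup of an abelian topological group `G` with
`G/H` a torsion group, then the restriction map `P^n(G, X) → P^n(H, X)` is injective;
consequently `dim P^n(G, X) ≤ dim P^n(H, X)`. -/
theorem restriction_to_torsion_quotient_subgroup_injective
    {G X : Type*} [AddCommGroup G] [TopologicalSpace G] [IsTopologicalAddGroup G]
    [AddCommGroup X] [Module ℂ X] [TopologicalSpace X] [IsTopologicalAddGroup X]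
    [ContinuousSMul ℂ X]
    (H : AddSubgroup G) (hHclosed : IsClosed (H : Set G))
    (htor : ∀ x : G ⧸ H, IsOfFinAddOrder x) (n : ℕ) :
    (∀ p q : G → X, IsPolyDeg n p → IsPolyDeg n q →
        (∀ x : H, p (x : G) = q (x : G)) → p = q) ∧
    Module.rank ℂ (polySpace G X n) ≤ Module.rank ℂ (polySpace H X n) := by
  have key : ∀ p q : G → X, IsPolyDeg n p → IsPolyDeg n q →
      (∀ x : H, p (x : G) = q (x : G)) → p = q := by
    intro p q hp hq hagree
    have hr : ∀ h : G, (delta h)^[n+1] (p - q) = 0 := fun h => by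
      rw [my_delta_iter_sub, hp.2 h, hq.2 h, sub_zero]
    have h0 : ∀ t ∈ H, (p - q) t = 0 := by
      intro t ht
      simp only [Pi.sub_apply]
      rw [hagree ⟨t, ht⟩, sub_self]
    have hz := my_poly_vanish H htor n (p - q) hr h0
    funext t
    have := hz t
    simp only [Pi.sub_apply] at this
    exact sub_eq_zero.mp this
  refine ⟨key, ?_⟩
  let ρ : polySpace G X n →ₗ[ℂ] polySpace H X n :=
    { toFun := fun f => ⟨fun t : H => f.1 ↑t, my_restrict_mem f.2⟩
      map_add' := fun f g => rfl
      map_smul' := fun c f => rfl }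
  have hinj : Function.Injective ρ := by
    intro f g hfg
    apply Subtype.ext
    refine key f.1 g.1 f.2 g.2 ?_
    intro t
    exact congrFun (Subtype.ext_iff.mp hfg) t
  exact LinearMap.rank_le_of_injective ρ hinj
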